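/- Let n̂ ≥ 2, m ≥ 1, ρ ∈ ℂ and u₁, …, u_m ∈ ℂ with u_i + u_m + ρ ≠ 0 for all i < m; write ũ := −u−ρ. On (ℂ^{n̂})^{⊗m}⊗(ℂ^{n̂})^{⊗m}, with the first m tensor factors labelled ȧ₁,…,ȧ_m and the last m labelled ä₁,…,ä_m, let η := E₂^{⊗m}⊗E₁^{⊗m} and ℛ := R_{ȧ_{m−1}ä_m}(ũ_{m−1}−u_m)·R_{ȧ_{m−2}ä_m}(ũ_{m−2}−u_m)⋯R_{ȧ_1ä_m}(ũ_1−u_m). Then ℛ·η = η + Σ_{j=1}^{m−1} [ ∏_{k=j+1}^{m−1} f^+(u_k, ũ_m) ] / (u_j − ũ_m) · P_{ȧ_jä_m}·η, where P_{ȧ_jä_m} is the permutation of the factors ȧ_j and ä_m. -/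

import Mathlib

open scoped BigOperators Classical

noncomputable section

namespace TY

/-- `f⁺(u,v) := (u - v + 1)/(u - v)`. -/
def fp (a b : ℂ) : ℂ := (a - b + 1) / (a - b)

/-- `ũ := -u - ρ`. -/
def ut (ρ w : ℂ) : ℂ := -w - ρ

/-- The permutation operator `P` on `ℂ^k ⊗ ℂ^k`. -/
def Pm (k : ℕ) : Matrix (Fin k × Fin k) (Fin k × Fin k) ℂ :=
  Matrix.of fun x y => if x.1 = y.2 ∧ x.2 = y.1 then 1 else 0

/-- Yang's R-matrix `R(u) = I - u⁻¹ P` on `ℂ^k ⊗ ℂ^k`. -/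
def Rm (k : ℕ) (c : ℂ) : Matrix (Fin k × Fin k) (Fin k × Fin k) ℂ := 1 - c⁻¹ • Pm k

/-- Index type for `(ℂ^{n̂})^{⊗m} ⊗ (ℂ^{n̂})^{⊗m}`, the first `m` factors being labelled
`ȧ₁,…,ȧ_m` (first component) and the last `m` factors `ä₁,…,ä_m` (second component). -/
abbrev WIdx (nh m : ℕ) := (Fin m → Fin nh) × (Fin m → Fin nh)

/-- A two-site operator: `A` acting on the factors `ȧ_i` and `ä_l`. -/
def twoSite (nh m : ℕ) (A : Matrix (Fin nh × Fin nh) (Fin nh × Fin nh) ℂ) (i l : Fin m) :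
    Matrix (WIdx nh m) (WIdx nh m) ℂ :=
  Matrix.of fun x y => A (x.1 i, x.2 l) (y.1 i, y.2 l) *
    (if (∀ r, r ≠ i → x.1 r = y.1 r) ∧ (∀ r, r ≠ l → x.2 r = y.2 r) then 1 else 0)

/-- The vector `η = E₂^{⊗m} ⊗ E₁^{⊗m}`. -/
def etaV (nh m : ℕ) (h2 : 2 ≤ nh) : WIdx nh m → ℂ :=
  fun x => if (∀ r, x.1 r = ⟨1, h2⟩) ∧ (∀ r, x.2 r = ⟨0, by omega⟩) then 1 else 0


def vpat {nh m : ℕ} (a b : Fin m → Fin nh) : WIdx nh m → ℂ :=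
  fun x => if x.1 = a ∧ x.2 = b then 1 else 0

lemma twoSite_mulVec_vpat {nh m : ℕ} (A : Matrix (Fin nh × Fin nh) (Fin nh × Fin nh) ℂ)
    (i l : Fin m) (a b : Fin m → Fin nh) :
    (twoSite nh m A i l).mulVec (vpat a b) = fun x =>
      A (x.1 i, x.2 l) (a i, b l) *
        (if (∀ r, r ≠ i → x.1 r = a r) ∧ (∀ r, r ≠ l → x.2 r = b r) then 1 else 0) := by
  funext x
  have hv : ∀ y : WIdx nh m, vpat a b y = if y = (a, b) then 1 else 0 := by
    intro y; simp [vpat, Prod.ext_iff]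
  calc (twoSite nh m A i l).mulVec (vpat a b) x
      = ∑ y : WIdx nh m, (if y = (a, b) then twoSite nh m A i l x y else 0) := by
        simp only [Matrix.mulVec, dotProduct, hv, mul_ite, mul_one, mul_zero]
    _ = twoSite nh m A i l x (a, b) := by
        rw [Finset.sum_ite_eq' Finset.univ (a, b) (fun y => twoSite nh m A i l x y)]
        simp
    _ = _ := rfl

lemma Pm_twoSite_mulVec {nh m : ℕ} (i l : Fin m) (a b : Fin m → Fin nh) :
    (twoSite nh m (Pm nh) i l).mulVec (vpat a b)
      = vpat (Function.update a i (b l)) (Function.update b l (a i)) := by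
  funext x
  rw [twoSite_mulVec_vpat]
  have hcond : (x.1 = Function.update a i (b l) ∧ x.2 = Function.update b l (a i)) ↔
      ((x.1 i = b l ∧ x.2 l = a i) ∧
        (∀ r, r ≠ i → x.1 r = a r) ∧ (∀ r, r ≠ l → x.2 r = b r)) := by
    rw [Function.eq_update_iff, Function.eq_update_iff]
    tauto
  rcases Classical.em (x.1 i = b l ∧ x.2 l = a i) with h1 | h1 <;>
    rcases Classical.em ((∀ r, r ≠ i → x.1 r = a r) ∧ (∀ r, r ≠ l → x.2 r = b r)) with h2 | h2 <;>
      simp [Pm, vpat, hcond, h1, h2]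

lemma twoSite_one {nh m : ℕ} (i l : Fin m) : twoSite nh m 1 i l = 1 := by
  ext x y
  have hcond : ((x.1 i = y.1 i ∧ x.2 l = y.2 l) ∧
      (∀ r, r ≠ i → x.1 r = y.1 r) ∧ (∀ r, r ≠ l → x.2 r = y.2 r)) ↔ x = y := by
    constructor
    · rintro ⟨⟨hi, hl⟩, hr1, hr2⟩
      obtain ⟨x1, x2⟩ := x; obtain ⟨y1, y2⟩ := y
      simp only [Prod.mk.injEq]
      constructor <;> funext r
      · by_cases hr : r = i
        · subst hr; exact hi
        · exact hr1 r hr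
      · by_cases hr : r = l
        · subst hr; exact hl
        · exact hr2 r hr
    · rintro rfl; exact ⟨⟨rfl, rfl⟩, fun _ _ => rfl, fun _ _ => rfl⟩
  simp only [twoSite, Matrix.of_apply, Matrix.one_apply, Prod.mk.injEq]
  rcases Classical.em (x = y) with h | h
  · subst h; simp
  · rw [if_neg h]
    rcases Classical.em (x.1 i = y.1 i ∧ x.2 l = y.2 l) with h1 | h1
    · rw [if_pos h1, one_mul, if_neg]
      intro h2; exact h (hcond.mp ⟨h1, h2⟩)
    · rw [if_neg h1, zero_mul]

lemma twoSite_sub {nh m : ℕ} (A B : Matrix (Fin nh × Fin nh) (Fin nh × Fin nh) ℂ) (i l : Fin m) :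
    twoSite nh m (A - B) i l = twoSite nh m A i l - twoSite nh m B i l := by
  ext x y
  simp only [twoSite, Matrix.of_apply, Matrix.sub_apply, sub_mul]

lemma twoSite_smul {nh m : ℕ} (c : ℂ) (A : Matrix (Fin nh × Fin nh) (Fin nh × Fin nh) ℂ)
    (i l : Fin m) : twoSite nh m (c • A) i l = c • twoSite nh m A i l := by
  ext x y
  simp only [twoSite, Matrix.of_apply, Matrix.smul_apply, smul_eq_mul, mul_assoc]

lemma Rm_twoSite_mulVec {nh m : ℕ} (c : ℂ) (i l : Fin m) (w : WIdx nh m → ℂ) :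
    (twoSite nh m (Rm nh c) i l).mulVec w
      = w - c⁻¹ • (twoSite nh m (Pm nh) i l).mulVec w := by
  rw [Rm, twoSite_sub, twoSite_smul, twoSite_one, Matrix.sub_mulVec, Matrix.one_mulVec,
    Matrix.smul_mulVec]

def vj (nh m : ℕ) (h2 : 2 ≤ nh) (L j : Fin m) : WIdx nh m → ℂ :=
  vpat (Function.update (fun _ => (⟨1, h2⟩ : Fin nh)) j ⟨0, by omega⟩)
       (Function.update (fun _ => (⟨0, by omega⟩ : Fin nh)) L ⟨1, h2⟩)

lemma etaV_eq_vpat (nh m : ℕ) (h2 : 2 ≤ nh) :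
    etaV nh m h2 = vpat (fun _ => (⟨1, h2⟩ : Fin nh)) (fun _ => (⟨0, by omega⟩ : Fin nh)) := by
  funext x
  simp only [etaV, vpat, funext_iff, Fin.ext_iff]

lemma Pm_mulVec_eta {nh m : ℕ} (h2 : 2 ≤ nh) (L j : Fin m) :
    (twoSite nh m (Pm nh) j L).mulVec (etaV nh m h2) = vj nh m h2 L j := by
  rw [etaV_eq_vpat, Pm_twoSite_mulVec]
  rfl

lemma vpat_congr {nh m : ℕ} {a a' b b' : Fin m → Fin nh} (ha : ∀ r, a r = a' r)
    (hb : ∀ r, b r = b' r) : vpat a b = vpat a' b' := by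
  rw [funext ha, funext hb]

lemma Pm_mulVec_vj_ne {nh m : ℕ} (h2 : 2 ≤ nh) (L i j : Fin m) (hij : i ≠ j) :
    (twoSite nh m (Pm nh) i L).mulVec (vj nh m h2 L j) = vj nh m h2 L j := by
  rw [vj, Pm_twoSite_mulVec]
  apply vpat_congr <;> intro r <;>
    simp only [Function.update_apply] <;> split_ifs <;> simp_all

lemma Pm_mulVec_vj_self {nh m : ℕ} (h2 : 2 ≤ nh) (L j : Fin m) :
    (twoSite nh m (Pm nh) j L).mulVec (vj nh m h2 L j) = etaV nh m h2 := by
  rw [vj, Pm_twoSite_mulVec, etaV_eq_vpat]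
  apply vpat_congr <;> intro r <;>
    simp only [Function.update_apply] <;> split_ifs <;> simp_all

lemma mulVec_sum {nh m : ℕ} (M : Matrix (WIdx nh m) (WIdx nh m) ℂ) (s : Finset (Fin m))
    (f : Fin m → WIdx nh m → ℂ) :
    M.mulVec (∑ j ∈ s, f j) = ∑ j ∈ s, M.mulVec (f j) := by
  simp only [← Matrix.mulVecLin_apply, map_sum]





lemma main_aux (nh m : ℕ) (h2 : 2 ≤ nh) (hm : 1 ≤ m) (ρ : ℂ) (u : Fin m → ℂ)
    (L : Fin m) (hL : L.val = m - 1)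
    (hgen : ∀ i : Fin m, i.val < m - 1 → u i + u L + ρ ≠ 0) :
    (((List.finRange m).reverse.map fun j =>
        if j.val < m - 1 then twoSite nh m (Rm nh (ut ρ (u j) - u L)) j L
        else 1).prod).mulVec (etaV nh m h2)
      = etaV nh m h2 +
        ∑ j ∈ Finset.univ.filter (fun j : Fin m => j.val < m - 1),
          ((∏ k ∈ Finset.Ioo j L, fp (u k) (ut ρ (u L))) / (u j - ut ρ (u L))) •
            (twoSite nh m (Pm nh) j L).mulVec (etaV nh m h2) := by
  classical
  -- nonvanishing of denominators
  have hd : ∀ j : Fin m, j.val < m - 1 → u j - ut ρ (u L) ≠ 0 := by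
    intro j hj h
    apply hgen j hj
    simp only [ut] at h
    linear_combination h
  have hc : ∀ j : Fin m, j.val < m - 1 → ut ρ (u j) - u L ≠ 0 := by
    intro j hj h
    apply hgen j hj
    simp only [ut] at h
    linear_combination -h
  have hfp : ∀ j : Fin m, j.val < m - 1 →
      fp (u j) (ut ρ (u L)) = 1 - (ut ρ (u j) - u L)⁻¹ := by
    intro j hj
    have h1 := hd j hj
    have h2' := hc j hj
    simp only [fp, ut] at *
    field_simp
    ring
  have hinvd : ∀ j : Fin m, (u j - ut ρ (u L))⁻¹ = -(ut ρ (u j) - u L)⁻¹ := by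
    intro j
    have : u j - ut ρ (u L) = -(ut ρ (u j) - u L) := by simp only [ut]; ring
    rw [this, inv_neg]
  set g : ℕ → Matrix (WIdx nh m) (WIdx nh m) ℂ := fun k =>
    if h : k < m - 1 then
      twoSite nh m (Rm nh (ut ρ (u ⟨k, by omega⟩) - u L)) ⟨k, by omega⟩ L
    else 1 with hg
  have key : ∀ n : ℕ, n ≤ m - 1 →
      (((List.range n).reverse.map g).prod).mulVec (etaV nh m h2)
        = etaV nh m h2 +
          ∑ j ∈ Finset.univ.filter (fun j : Fin m => j.val < n),
            ((∏ k ∈ Finset.univ.filter (fun k : Fin m => j.val < k.val ∧ k.val < n),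
                fp (u k) (ut ρ (u L))) / (u j - ut ρ (u L))) • vj nh m h2 L j := by
    intro n
    induction n with
    | zero =>
        intro _
        simp [Matrix.one_mulVec]
    | succ n ih =>
        intro hn1
        have hn : n < m - 1 := by omega
        have hnm : n < m := by omega
        have hsplit : (List.range (n + 1)).reverse.map g
            = g n :: ((List.range n).reverse.map g) := by
          rw [List.range_succ, List.reverse_append]
          simp
        have hgn : g n = twoSite nh m (Rm nh (ut ρ (u ⟨n, hnm⟩) - u L)) ⟨n, hnm⟩ L := by
          rw [hg]
          exact dif_pos hn
        rw [hsplit, List.prod_cons, ← Matrix.mulVec_mulVec, ih (by omega), hgn,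
          Rm_twoSite_mulVec, Matrix.mulVec_add, mulVec_sum, Pm_mulVec_eta]
        -- rewrite the P-action on each summand
        have hsummand : ∀ j ∈ Finset.univ.filter (fun j : Fin m => j.val < n),
            (twoSite nh m (Pm nh) (⟨n, hnm⟩ : Fin m) L).mulVec
              (((∏ k ∈ Finset.univ.filter (fun k : Fin m => j.val < k.val ∧ k.val < n),
                  fp (u k) (ut ρ (u L))) / (u j - ut ρ (u L))) • vj nh m h2 L j)
              = ((∏ k ∈ Finset.univ.filter (fun k : Fin m => j.val < k.val ∧ k.val < n),
                  fp (u k) (ut ρ (u L))) / (u j - ut ρ (u L))) • vj nh m h2 L j := by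
          intro j hj
          have hjn : j.val < n := by simpa using hj
          rw [Matrix.mulVec_smul, Pm_mulVec_vj_ne h2 L ⟨n, hnm⟩ j
            (Fin.ne_of_val_ne (by simp; omega))]
        rw [Finset.sum_congr rfl hsummand]
        -- now rewrite the RHS sum
        have hins : Finset.univ.filter (fun j : Fin m => j.val < n + 1)
            = insert (⟨n, hnm⟩ : Fin m) (Finset.univ.filter (fun j : Fin m => j.val < n)) := by
          ext k
          simp [Fin.ext_iff]
          omega
        have hnotmem : (⟨n, hnm⟩ : Fin m) ∉ Finset.univ.filter (fun j : Fin m => j.val < n) := by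
          simp
        rw [hins, Finset.sum_insert hnotmem]
        -- the new term
        have hempty : Finset.univ.filter
            (fun k : Fin m => (⟨n, hnm⟩ : Fin m).val < k.val ∧ k.val < n + 1) = ∅ := by
          ext k
          simp
        rw [hempty]
        -- the old terms pick up a factor fp (u ⟨n,_⟩) (ut ρ (u L))
        have hcoef : ∀ j ∈ Finset.univ.filter (fun j : Fin m => j.val < n),
            ((∏ k ∈ Finset.univ.filter (fun k : Fin m => j.val < k.val ∧ k.val < n + 1),
                fp (u k) (ut ρ (u L))) / (u j - ut ρ (u L))) • vj nh m h2 L j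
            = fp (u ⟨n, hnm⟩) (ut ρ (u L)) •
              (((∏ k ∈ Finset.univ.filter (fun k : Fin m => j.val < k.val ∧ k.val < n),
                fp (u k) (ut ρ (u L))) / (u j - ut ρ (u L))) • vj nh m h2 L j) := by
          intro j hj
          have hjn : j.val < n := by simpa using hj
          have hprodins : Finset.univ.filter (fun k : Fin m => j.val < k.val ∧ k.val < n + 1)
              = insert (⟨n, hnm⟩ : Fin m)
                  (Finset.univ.filter (fun k : Fin m => j.val < k.val ∧ k.val < n)) := by
            ext k
            simp [Fin.ext_iff]
            omega
          have hnm2 : (⟨n, hnm⟩ : Fin m) ∉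
              Finset.univ.filter (fun k : Fin m => j.val < k.val ∧ k.val < n) := by
            simp
          rw [hprodins, Finset.prod_insert hnm2, smul_smul]
          congr 1
          field_simp
        rw [Finset.sum_congr rfl hcoef, ← Finset.smul_sum]
        rw [hfp ⟨n, hnm⟩ hn, Finset.prod_empty, one_div, hinvd ⟨n, hnm⟩]
        -- pure module algebra now
        generalize (ut ρ (u (⟨n, hnm⟩ : Fin m)) - u L)⁻¹ = c
        generalize (∑ j ∈ Finset.univ.filter (fun j : Fin m => j.val < n),
          ((∏ k ∈ Finset.univ.filter (fun k : Fin m => j.val < k.val ∧ k.val < n),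
              fp (u k) (ut ρ (u L))) / (u j - ut ρ (u L))) • vj nh m h2 L j) = A
        generalize vj nh m h2 L (⟨n, hnm⟩ : Fin m) = w
        generalize etaV nh m h2 = e
        module
  -- convert the stated list to `(List.range m).reverse.map g`
  have hfun : ∀ j : Fin m,
      (if j.val < m - 1 then twoSite nh m (Rm nh (ut ρ (u j) - u L)) j L else 1) = g j.val := by
    intro j
    rw [hg]
    by_cases hj : j.val < m - 1
    · rw [if_pos hj]
      simp only [dif_pos hj, Fin.eta]
    · rw [if_neg hj]
      simp only [dif_neg hj]
  have hlist : ((List.finRange m).reverse.map fun j =>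
      if j.val < m - 1 then twoSite nh m (Rm nh (ut ρ (u j) - u L)) j L else 1)
      = (List.range m).reverse.map g := by
    rw [← List.map_coe_finRange_eq_range (n := m), ← List.map_reverse, List.map_map]
    exact List.map_congr_left (fun j _ => hfun j)
  rw [hlist]
  have htop : (List.range m).reverse.map g = g (m - 1) :: ((List.range (m - 1)).reverse.map g) := by
    have hr : List.range m = List.range (m - 1) ++ [m - 1] := by
      rw [show m = (m - 1) + 1 by omega, Nat.add_sub_cancel, List.range_succ]
    rw [hr, List.reverse_append]
    simp
  have hg1 : g (m - 1) = 1 := by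
    rw [hg]
    exact dif_neg (by omega)
  rw [htop, List.prod_cons, hg1, one_mul, key (m - 1) le_rfl]
  congr 1
  apply Finset.sum_congr rfl
  intro j hj
  have hj' : j.val < m - 1 := by simpa using hj
  rw [Pm_mulVec_eta h2 L j]
  have hIoo : Finset.univ.filter (fun k : Fin m => j.val < k.val ∧ k.val < m - 1)
      = Finset.Ioo j L := by
    ext k
    simp only [Finset.mem_filter, Finset.mem_univ, true_and, Finset.mem_Ioo, Fin.lt_def, hL]
  rw [hIoo]


/-- with `ℛ = R_{ȧ_{m−1}ä_m}(ũ_{m−1}−u_m)⋯R_{ȧ_1ä_m}(ũ_1−u_m)`,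
`ℛ·η = η + Σ_{j=1}^{m−1} [∏_{k=j+1}^{m−1} f⁺(u_k,ũ_m)]/(u_j − ũ_m) · P_{ȧ_jä_m}·η`
(indices realised 0-based, so the last index is `⟨m-1,_⟩`). -/
theorem R_product_on_vacuum (nh m : ℕ) (h2 : 2 ≤ nh) (hm : 1 ≤ m) (ρ : ℂ)
    (u : Fin m → ℂ)
    (hgen : ∀ i : Fin m, i.val < m - 1 → u i + u ⟨m - 1, by omega⟩ + ρ ≠ 0) :
    (((List.finRange m).reverse.map fun j =>
        if j.val < m - 1 then
          twoSite nh m (Rm nh (ut ρ (u j) - u ⟨m - 1, by omega⟩)) j ⟨m - 1, by omega⟩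
        else 1).prod).mulVec (etaV nh m h2)
      = etaV nh m h2 +
        ∑ j ∈ Finset.univ.filter (fun j : Fin m => j.val < m - 1),
          ((∏ k ∈ Finset.Ioo j (⟨m - 1, by omega⟩ : Fin m),
              fp (u k) (ut ρ (u ⟨m - 1, by omega⟩))) /
            (u j - ut ρ (u ⟨m - 1, by omega⟩))) •
            (twoSite nh m (Pm nh) j ⟨m - 1, by omega⟩).mulVec (etaV nh m h2) := by
  exact main_aux nh m h2 hm ρ u ⟨m - 1, by omega⟩ rfl hgen

end TY
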